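/- For any subset $H$ of a unital associative $K$-algebra $R$ and all $p,q\ge1$, the product of Lie centralizers satisfies $\mathrm{L}_p(H)\cdot\mathrm{L}_q(H)\subseteq\mathrm{L}_{p+q-1}(H)$; that is, if $r\in\mathrm{L}_p(H)$ and $s\in\mathrm{L}_q(H)$ then $rs\in\mathrm{L}_{p+q-1}(H)$. -/

import Mathlib

/-- `lprod r [x₁, …, xₘ]` is the left-normed commutator `[r, x₁, …, xₘ]_{m+1}`. -/
def lprod {R : Type*} [Ring R] (r : R) (l : List R) : R :=
  l.foldl (fun a x => a * x - x * a) r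

/-- The `k`-th Lie centralizer of a subset `H` of `R`:
`Lcen k H = {r : R | [r, x₁, …, x_k]_{k+1} = 0 for all xᵢ ∈ H}`. -/
def Lcen {R : Type*} [Ring R] (k : ℕ) (H : Set R) : Set R :=
  {r : R | ∀ x : Fin k → R, (∀ i, x i ∈ H) → lprod r (List.ofFn x) = 0}

lemma lprod_cons {R : Type*} [Ring R] (r x : R) (l : List R) :
    lprod r (x :: l) = lprod (r * x - x * r) l := rfl

lemma lprod_zero {R : Type*} [Ring R] (l : List R) : lprod (0 : R) l = 0 := by
  induction l with
  | nil => rfl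
  | cons x l ih => simpa [lprod_cons] using ih

lemma lprod_add {R : Type*} [Ring R] (a b : R) (l : List R) :
    lprod (a + b) l = lprod a l + lprod b l := by
  induction l generalizing a b with
  | nil => rfl
  | cons x l ih =>
    rw [lprod_cons, lprod_cons, lprod_cons, ← ih]
    congr 1
    noncomm_ring

lemma lprod_append {R : Type*} [Ring R] (r : R) (l₁ l₂ : List R) :
    lprod r (l₁ ++ l₂) = lprod (lprod r l₁) l₂ :=
  List.foldl_append ..

lemma ofFn_get_cast {R : Type*} (l : List R) (k : ℕ) (h : l.length = k) :
    List.ofFn (fun i : Fin k => l.get (Fin.cast h.symm i)) = l := by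
  subst h
  simp

/-- Stabilized form of membership in `Lcen`. -/
lemma Lcen_ge {R : Type*} [Ring R] {k : ℕ} {H : Set R} {r : R} (hr : r ∈ Lcen k H)
    (m : List R) (hlen : k ≤ m.length) (hm : ∀ t ∈ m, t ∈ H) : lprod r m = 0 := by
  have h1 : m = m.take k ++ m.drop k := (List.take_append_drop k m).symm
  have hlt : (m.take k).length = k := by simp [List.length_take, Nat.min_eq_left hlen]
  have hofn : List.ofFn (fun i : Fin k => (m.take k).get (Fin.cast hlt.symm i)) = m.take k := by
    have := ofFn_get_cast (m.take k) k hlt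
    exact this
  have h0 : lprod r (m.take k) = 0 := by
    rw [← hofn]
    apply hr
    intro i
    have : (m.take k).get (Fin.cast hlt.symm i) ∈ m.take k := List.get_mem _ _
    exact hm _ (List.mem_of_mem_take this)
  rw [h1, lprod_append, h0, lprod_zero]

lemma key {R : Type*} [Ring R] (H : Set R) :
    ∀ (l : List R), (∀ t ∈ l, t ∈ H) → ∀ (a b : ℕ) (r s : R),
      (∀ m : List R, a ≤ m.length → (∀ t ∈ m, t ∈ H) → lprod r m = 0) →
      (∀ m : List R, b ≤ m.length → (∀ t ∈ m, t ∈ H) → lprod s m = 0) →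
      a + b ≤ l.length + 1 → lprod (r * s) l = 0 := by
  intro l
  induction l with
  | nil =>
    intro _ a b r s hr hs hab
    simp only [List.length_nil, Nat.zero_add] at hab
    rcases (by omega : a = 0 ∨ b = 0) with h | h
    · have : r = 0 := hr [] (by simp [h]) (by simp)
      simp [this, lprod_zero]
    · have : s = 0 := hs [] (by simp [h]) (by simp)
      simp [this, lprod_zero]
  | cons x l ih =>
    intro hmem a b r s hr hs hab
    have hx : x ∈ H := hmem x (by simp)
    have hl : ∀ t ∈ l, t ∈ H := fun t ht => hmem t (by simp [ht])
    rcases Nat.eq_zero_or_pos a with h | ha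
    · have : r = 0 := hr [] (by simp [h]) (by simp)
      simp [this, lprod_zero]
    rcases Nat.eq_zero_or_pos b with h | hb
    · have : s = 0 := hs [] (by simp [h]) (by simp)
      simp [this, lprod_zero]
    rw [lprod_cons]
    have hsplit : r * s * x - x * (r * s) =
        (r * x - x * r) * s + r * (s * x - x * s) := by noncomm_ring
    rw [hsplit, lprod_add]
    have h1 : lprod ((r * x - x * r) * s) l = 0 := by
      refine ih hl (a - 1) b _ s ?_ hs ?_
      · intro m hm hmH
        have := hr (x :: m) (by simp; omega) ?_
        · rwa [lprod_cons] at this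
        · intro t ht
          rcases List.mem_cons.mp ht with h | h
          · exact h ▸ hx
          · exact hmH t h
      · simp at hab ⊢; omega
    have h2 : lprod (r * (s * x - x * s)) l = 0 := by
      refine ih hl a (b - 1) r _ hr ?_ ?_
      · intro m hm hmH
        have := hs (x :: m) (by simp; omega) ?_
        · rwa [lprod_cons] at this
        · intro t ht
          rcases List.mem_cons.mp ht with h | h
          · exact h ▸ hx
          · exact hmH t h
      · simp at hab ⊢; omega
    rw [h1, h2, add_zero]

/-- Products of Lie centralizers: `L_p(H) · L_q(H) ⊆ L_{p+q-1}(H)`. -/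
theorem Lcen_mul_subset {K : Type*} [Field K] {R : Type*} [Ring R] [Algebra K R]
    (H : Set R) {p q : ℕ} (hp : 1 ≤ p) (hq : 1 ≤ q)
    {r s : R} (hr : r ∈ Lcen p H) (hs : s ∈ Lcen q H) :
    r * s ∈ Lcen (p + q - 1) H := by
  intro x hx
  refine key H (List.ofFn x) ?_ p q r s (Lcen_ge hr) (Lcen_ge hs) ?_
  · intro t ht
    obtain ⟨i, rfl⟩ := List.mem_ofFn.mp ht
    exact hx i
  · simp; omega
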